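/- arXiv:1211.2308 — 6 statements merged into one kernel-verified Lean document; each statement's English description precedes it below -/
import Mathlib

section
/- Let R be a commutative ring, I an ideal, and θ, ω two sets of derivations of R such that: (1) I is ω-invariant, i.e., ω[I] ⊆ I; and (2) for every D ∈ ω and X ∈ θ, the Lie bracket [D,X] lies in the R-module generated by θ ∪ ω. Define H(0) = I and H(i+1) = H(i) + θ[H(i)]. Then every ideal H(i) is ω-invariant, i.e., ω[H(i)] ⊆ H(i) for all i. -/
/-- The ideal generated by `{X f : X ∈ θ, f ∈ J}`. -/
def derSetIdeal {R : Type*} [CommRing R] (θ : Set (Derivation ℤ R R)) (J : Ideal R) : Ideal R :=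
  Ideal.span {y | ∃ D ∈ θ, ∃ f ∈ J, y = D f}

/-- if `I` is `ω`-invariant and all brackets `⁅D, X⁆` (`D ∈ ω`, `X ∈ θ`)
lie in the `R`-module generated by `θ ∪ ω`, then every ideal of the chain
`H 0 = I`, `H (i+1) = H i + θ[H i]` is `ω`-invariant. -/
theorem tangency_chain_omega_invariant {R : Type*} [CommRing R]
    (θ ω : Set (Derivation ℤ R R)) (I : Ideal R)
    (hinv : ∀ D ∈ ω, ∀ f ∈ I, D f ∈ I)
    (hbr : ∀ D ∈ ω, ∀ X ∈ θ, ⁅D, X⁆ ∈ Submodule.span R (θ ∪ ω))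
    (H : ℕ → Ideal R)
    (h0 : H 0 = I) (hs : ∀ i, H (i + 1) = H i + derSetIdeal θ (H i)) :
    ∀ i, ∀ D ∈ ω, ∀ f ∈ H i, D f ∈ H i := by
  intro i
  induction i with
  | zero => intro D hD f hf; rw [h0] at hf ⊢; exact hinv D hD f hf
  | succ i ih =>
    intro D hD f hf
    rw [hs i] at hf ⊢
    -- H i ≤ H (i+1), derSetIdeal θ (H i) ≤ H (i+1)
    have hle1 : H i ≤ H i + derSetIdeal θ (H i) := le_sup_left
    have hle2 : derSetIdeal θ (H i) ≤ H i + derSetIdeal θ (H i) := le_sup_right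
    obtain ⟨a, ha, b, hb, rfl⟩ := Submodule.mem_sup.mp hf
    rw [map_add]
    refine add_mem (hle1 (ih D hD a ha)) ?_
    -- show D b ∈ H i + derSetIdeal θ (H i) for b in the span
    refine Submodule.span_induction (p := fun b _ => D b ∈ H i + derSetIdeal θ (H i))
      ?_ ?_ ?_ ?_ hb
    · rintro y ⟨X, hX, g, hg, rfl⟩
      have key : D (X g) = ⁅D, X⁆ g + X (D g) := by
        rw [Derivation.commutator_apply]; ring
      rw [key]
      refine add_mem ?_ (hle2 (Ideal.subset_span ⟨X, hX, D g, ih D hD g hg, rfl⟩))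
      -- ⁅D, X⁆ g ∈ H (i+1)
      have : ∀ E ∈ Submodule.span R (θ ∪ ω), (E : Derivation ℤ R R) g ∈
          H i + derSetIdeal θ (H i) := by
        intro E hE
        refine Submodule.span_induction
          (p := fun E _ => (E : Derivation ℤ R R) g ∈ H i + derSetIdeal θ (H i)) ?_ ?_ ?_ ?_ hE
        · rintro Y (hY | hY)
          · exact hle2 (Ideal.subset_span ⟨Y, hY, g, hg, rfl⟩)
          · exact hle1 (ih Y hY g hg)
        · simp
        · intro x y _ _ hx hy
          rw [Derivation.add_apply]; exact add_mem hx hy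
        · intro r x _ hx
          rw [Derivation.smul_apply]; exact Submodule.smul_mem _ r hx
      exact this _ (hbr D hD X hX)
    · simp
    · intro x y _ _ hx hy; rw [map_add]; exact add_mem hx hy
    · intro r x hxmem hx
      rw [smul_eq_mul, Derivation.leibniz]
      refine add_mem (Submodule.smul_mem _ r hx) ?_
      have hx' : x ∈ H i + derSetIdeal θ (H i) := hle2 hxmem
      rw [smul_eq_mul]
      exact Ideal.mul_mem_right (D r) _ hx'
end

section
/- Let K be a field of characteristic zero, R = K[[x, y₁, ..., y_{n-1}]] the formal power series ring, and X = ∂/∂x. Let I be an ideal of R invariant under X (i.e., X(I) ⊆ I) that is closed with respect to the topology of coefficient-wise convergence. If f = Σ_{i≥0} h_i(y) x^i belongs to I, where each h_i ∈ K[[y₁,...,y_{n-1}]], then every coefficient h_i(y) belongs to I. -/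
open PowerSeries

section aux
variable {A : Type*} [CommRing A]

/-- The operator `g ↦ X * g' - c * g`. -/
noncomputable def eulerOp (c : A) (g : A⟦X⟧) : A⟦X⟧ :=
  X * PowerSeries.derivative A g - PowerSeries.C c * g

lemma coeff_eulerOp (c : A) (g : A⟦X⟧) (j : ℕ) :
    PowerSeries.coeff j (eulerOp c g) = ((j : A) - c) * PowerSeries.coeff j g := by
  cases j with
  | zero => simp [eulerOp, coeff_zero_X_mul, coeff_C_mul, sub_mul]
  | succ m =>
      simp only [eulerOp, map_sub, coeff_succ_X_mul, coeff_derivative, coeff_C_mul, sub_mul]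
      push_cast
      ring

noncomputable def eulerList (L : List A) (g : A⟦X⟧) : A⟦X⟧ := L.foldr eulerOp g

lemma coeff_eulerList (L : List A) (g : A⟦X⟧) (j : ℕ) :
    PowerSeries.coeff j (eulerList L g) =
      (L.map fun c => (j : A) - c).prod * PowerSeries.coeff j g := by
  induction L with
  | nil => simp [eulerList]
  | cons c L ih =>
      simp only [eulerList, List.foldr_cons, List.map_cons, List.prod_cons]
      rw [show (List.foldr eulerOp g L) = eulerList L g from rfl] at *
      rw [coeff_eulerOp, ih, mul_assoc]

lemma coeff_iterate_derivative (g : A⟦X⟧) (i j : ℕ) :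
    PowerSeries.coeff j ((PowerSeries.derivative A)^[i] g) =
      PowerSeries.coeff (j + i) g * ∏ t ∈ Finset.range i, ((j + t + 1 : ℕ) : A) := by
  induction i generalizing g with
  | zero => simp
  | succ i ih =>
      rw [Function.iterate_succ_apply, ih, coeff_derivative, Finset.prod_range_succ,
        ← add_assoc]
      push_cast
      ring

end aux

/-- in `R = K[[x, y₁, …, y_{n-1}]]` (realized as power series in `x` over
`S = K[[y₁, …, y_{n-1}]]`), if an ideal `I` is invariant under `∂/∂x` and closed for
coefficient-wise convergence, then all the coefficients `h_i(y)` of any `f ∈ I`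
(viewed as constants in `x`) belong to `I`. -/
theorem coefficients_of_invariant_closed_ideal
    {K : Type*} [Field K] [CharZero K] (n : ℕ)
    (I : Ideal (PowerSeries (MvPowerSeries (Fin (n - 1)) K)))
    (hX : ∀ f ∈ I, PowerSeries.derivative (MvPowerSeries (Fin (n - 1)) K) f ∈ I)
    (hclosed : ∀ g : PowerSeries (MvPowerSeries (Fin (n - 1)) K),
      (∀ N : ℕ, ∃ h ∈ I, ∀ i ≤ N,
        PowerSeries.coeff i h =
        PowerSeries.coeff i g) → g ∈ I) :
    ∀ f ∈ I, ∀ i : ℕ,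
      PowerSeries.C
        (PowerSeries.coeff i f) ∈ I := by
  set A := MvPowerSeries (Fin (n - 1)) K with hA
  set C' : K →+* A := MvPowerSeries.C (σ := Fin (n - 1)) (R := K) with hC'
  intro f hf i
  -- membership preservation lemmas
  have hiter : ∀ (k : ℕ) (g : A⟦X⟧), g ∈ I → (PowerSeries.derivative A)^[k] g ∈ I := by
    intro k
    induction k with
    | zero => intro g hg; simpa using hg
    | succ k ih =>
        intro g hg
        rw [Function.iterate_succ_apply]
        exact ih _ (hX g hg)
  have heul : ∀ (L : List A) (g : A⟦X⟧), g ∈ I → eulerList L g ∈ I := by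
    intro L
    induction L with
    | nil => intro g hg; exact hg
    | cons c L ih =>
        intro g hg
        have : eulerList (c :: L) g = eulerOp c (eulerList L g) := rfl
        rw [this, eulerOp]
        exact sub_mem (Ideal.mul_mem_left _ _ (hX _ (ih g hg)))
          (Ideal.mul_mem_left _ _ (ih g hg))
  apply hclosed
  intro N
  -- the list of indices to kill
  set Lnat : List ℕ := (List.range (N + i + 1)).filter (fun m => m ≠ i) with hLnat
  set L : List A := Lnat.map (fun m : ℕ => C' (m : K)) with hL
  set u : K := (∏ t ∈ Finset.range i, ((t + 1 : ℕ) : K)) *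
      (Lnat.map (fun m => ((i : ℕ) : K) - ((m : ℕ) : K))).prod with hu
  have hu0 : u ≠ 0 := by
    apply mul_ne_zero
    · apply Finset.prod_ne_zero_iff.mpr
      intro t _
      exact_mod_cast Nat.succ_ne_zero t
    · apply List.prod_ne_zero
      intro hmem
      obtain ⟨m, hm, hm0⟩ := List.mem_map.mp hmem
      have hmne : m ≠ i := by
        have := (List.mem_filter.mp hm).2
        simpa using this
      exact hmne (Nat.cast_injective (sub_eq_zero.mp hm0)).symm
  refine ⟨PowerSeries.C (C' u⁻¹) *
    ((PowerSeries.derivative A)^[i] (eulerList L f)), ?_, ?_⟩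
  · exact Ideal.mul_mem_left _ _ (hiter i _ (heul L f hf))
  intro j hj
  rw [PowerSeries.coeff_C_mul, _root_.coeff_iterate_derivative, coeff_eulerList,
    PowerSeries.coeff_C]
  rcases Nat.eq_zero_or_pos j with hj0 | hj1
  · subst hj0
    rw [if_pos rfl]
    have hmap : (L.map fun c => ((0 + i : ℕ) : A) - c)
        = Lnat.map (fun m => C' (((i : ℕ) : K) - ((m : ℕ) : K))) := by
      rw [hL, List.map_map]
      apply List.map_congr_left
      intro m _
      simp [map_sub, map_natCast]
    rw [hmap]
    have hprod : ∀ l : List ℕ, (l.map (fun m => C' (((i : ℕ) : K) - ((m : ℕ) : K)))).prod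
        = C' ((l.map (fun m => ((i : ℕ) : K) - ((m : ℕ) : K))).prod) := by
      intro l
      induction l with
      | nil => simp
      | cons a l ih =>
          rw [List.map_cons, List.map_cons, List.prod_cons, List.prod_cons, ih, map_mul]
    have hF : (∏ t ∈ Finset.range i, ((0 + t + 1 : ℕ) : A))
        = C' (∏ t ∈ Finset.range i, ((t + 1 : ℕ) : K)) := by
      rw [map_prod]
      apply Finset.prod_congr rfl
      intro t _
      simp [map_natCast]
    rw [hprod Lnat, hF, zero_add]
    rw [show C' u⁻¹ * (C' ((Lnat.map (fun m => ((i : ℕ) : K) - ((m : ℕ) : K))).prod) *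
        PowerSeries.coeff i f * C' (∏ t ∈ Finset.range i, ((t + 1 : ℕ) : K)))
      = C' (u⁻¹ * ((Lnat.map (fun m => ((i : ℕ) : K) - ((m : ℕ) : K))).prod *
          (∏ t ∈ Finset.range i, ((t + 1 : ℕ) : K)))) * PowerSeries.coeff i f by
        rw [map_mul, map_mul]; ring]
    rw [show (Lnat.map (fun m => ((i : ℕ) : K) - ((m : ℕ) : K))).prod *
        (∏ t ∈ Finset.range i, ((t + 1 : ℕ) : K)) = u by rw [hu]; ring]
    rw [inv_mul_cancel₀ hu0, map_one, one_mul]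
  · rw [if_neg (Nat.pos_iff_ne_zero.mp hj1)]
    have hmem : ((j + i : ℕ) : A) - C' ((j + i : ℕ) : K) ∈
        L.map fun c => ((j + i : ℕ) : A) - c := by
      apply List.mem_map.mpr
      refine ⟨C' ((j + i : ℕ) : K), ?_, rfl⟩
      rw [hL]
      apply List.mem_map.mpr
      refine ⟨j + i, ?_, rfl⟩
      rw [hLnat]
      apply List.mem_filter.mpr
      constructor
      · exact List.mem_range.mpr (by omega)
      · simp; omega
    have h0 : ((j + i : ℕ) : A) - C' ((j + i : ℕ) : K) = 0 := by
      rw [map_natCast, sub_self]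
    rw [h0] at hmem
    rw [List.prod_eq_zero hmem]
    simp
end

section
/- Let R be a commutative ring, φ: R → S a ring homomorphism, X a derivation of R and Y a derivation of S such that Y∘φ = φ∘X (Y is φ-related to X). Then for every ideal I of R, the ideal generated in S by φ(X[I]) is contained in Y[I·S], where I·S is the extension of I and Y[J] denotes the ideal generated by {Y(g): g ∈ J}. Moreover φ((X[I] + I))·S = Y[I·S] + I·S when additionally the extension I·S is generated by φ(I) and S is generated as an algebra over φ(R) in a way that Y[I·S] + I·S absorbs such products (i.e., using the Leibniz rule: Y(a·φ(f)) = Y(a)φ(f) + aφ(X(f)) for f ∈ I). -/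
/-- The ideal generated by the image of an ideal under a derivation. -/
def derIdeal {R : Type*} [CommRing R] (D : Derivation ℤ R R) (I : Ideal R) : Ideal R :=
  Ideal.span {y | ∃ f ∈ I, y = D f}

lemma derIdeal_mem {R : Type*} [CommRing R] (D : Derivation ℤ R R) (I : Ideal R)
    {f : R} (hf : f ∈ I) : D f ∈ derIdeal D I :=
  Ideal.subset_span ⟨f, hf, rfl⟩

/-- if `Y` is `φ`-related to `X`, then `φ(X[I])·S ⊆ Y[I·S]`, and the
controlled identity `φ(X[I] + I)·S = Y[I·S] + I·S` holds (the affine version of the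
compatibility of the first generalized Fitting operation with pull-backs). -/
theorem related_derivation_ideal_transform
    {R S : Type*} [CommRing R] [CommRing S] (φ : R →+* S)
    (X : Derivation ℤ R R) (Y : Derivation ℤ S S)
    (hrel : ∀ r : R, Y (φ r) = φ (X r)) (I : Ideal R) :
    Ideal.map φ (derIdeal X I) ≤ derIdeal Y (Ideal.map φ I) ∧
      Ideal.map φ (derIdeal X I + I) =
        derIdeal Y (Ideal.map φ I) + Ideal.map φ I := by
  constructor
  · rw [Ideal.map_le_iff_le_comap, derIdeal, Ideal.span_le]
    rintro x ⟨f, hf, rfl⟩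
    show φ (X f) ∈ derIdeal Y (Ideal.map φ I)
    rw [← hrel]
    exact derIdeal_mem Y _ (Ideal.mem_map_of_mem φ hf)
  · set J : Ideal S := Ideal.map φ (derIdeal X I) + Ideal.map φ I with hJ
    have key : ∀ g ∈ Ideal.map φ I, Y g ∈ J := by
      intro g hg
      have : g ∈ Ideal.map φ I ∧ Y g ∈ J := by
        rw [Ideal.map, Ideal.span] at hg
        refine Submodule.span_induction ?_ ?_ ?_ ?_ hg
        · rintro x ⟨f, hf, rfl⟩
          refine ⟨Ideal.mem_map_of_mem φ hf, ?_⟩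
          rw [hrel]
          exact Ideal.mem_sup_left (Ideal.mem_map_of_mem φ (derIdeal_mem X I hf))
        · simp [Ideal.zero_mem]
        · rintro a b _ _ ⟨ha, ha'⟩ ⟨hb, hb'⟩
          exact ⟨Ideal.add_mem _ ha hb, by rw [map_add]; exact Ideal.add_mem _ ha' hb'⟩
        · rintro s a _ ⟨ha, ha'⟩
          refine ⟨Ideal.mul_mem_left _ s ha, ?_⟩
          have : Y (s * a) = s * Y a + a * Y s := by
            rw [Derivation.leibniz, smul_eq_mul, smul_eq_mul]
          rw [smul_eq_mul, this]
          exact Ideal.add_mem _ (Ideal.mul_mem_left _ s ha')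
            (Ideal.mem_sup_right (Ideal.mul_mem_right _ _ ha))
      exact this.2
    simp only [Submodule.add_eq_sup] at *
    rw [Ideal.map_sup]
    apply le_antisymm
    · refine sup_le_sup_right ?_ _
      rw [Ideal.map_le_iff_le_comap, derIdeal, Ideal.span_le]
      rintro x ⟨f, hf, rfl⟩
      show φ (X f) ∈ derIdeal Y (Ideal.map φ I)
      rw [← hrel]
      exact derIdeal_mem Y _ (Ideal.mem_map_of_mem φ hf)
    · refine sup_le ?_ le_sup_right
      rw [derIdeal, Ideal.span_le]
      rintro x ⟨g, hg, rfl⟩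
      exact key g hg
end

section
/- Let K be ℝ or ℂ and R = K[[x₁,...,xₙ]] with maximal ideal m = (x₁,...,xₙ). Let θ be a set of d derivations X₁,...,X_d of R. If the d×d determinant det[Xᵢ(fⱼ)] is a unit of R for some f₁,...,f_d ∈ m, then the vectors (X₁(x₁)(0),...,X₁(xₙ)(0)), ..., (X_d(x₁)(0),...,X_d(xₙ)(0)) (the linear parts evaluated at the origin) are linearly independent over K; in particular each Xᵢ is nonsingular at the origin. -/
open MvPowerSeries Finsupp

section Aux

variable {K : Type*} [CommRing K] {n : ℕ}

lemma mv_decomp (f : MvPowerSeries (Fin n) K) (hf : constantCoeff f = 0) :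
    ∃ g : Fin n → MvPowerSeries (Fin n) K,
      (∀ k, constantCoeff (g k) = coeff (single k 1) f) ∧
      f = ∑ k, X k * g k := by
  set g : Fin n → MvPowerSeries (Fin n) K := fun k =>
    (fun e => if ∀ j, j < k → e j = 0 then coeff (e + single k 1) f else 0 :
      (Fin n →₀ ℕ) → K) with hg
  refine ⟨g, ?_, ?_⟩
  · intro k
    show g k 0 = _
    rw [hg]
    simp
  · ext e
    by_cases he : e = 0
    · subst he
      rw [map_sum]
      simp [coeff_zero_X_mul, coeff_zero_eq_constantCoeff, hf]
    · have hsupp : e.support.Nonempty := support_nonempty_iff.mpr he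
      set k₀ := e.support.min' hsupp with hk₀
      have hk₀mem : k₀ ∈ e.support := e.support.min'_mem hsupp
      have hek₀ : 1 ≤ e k₀ := Nat.one_le_iff_ne_zero.mpr (mem_support_iff.mp hk₀mem)
      rw [map_sum]
      rw [Finset.sum_eq_single k₀]
      · rw [X_def, coeff_monomial_mul]
        rw [if_pos (single_le_iff.mpr hek₀), one_mul]
        have hcond : ∀ j, j < k₀ → ((e - single k₀ 1 : Fin n →₀ ℕ)) j = 0 := by
          intro j hj
          have hjn : j ∉ e.support := fun hjmem => absurd (e.support.min'_le j hjmem) (not_le.mpr hj)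
          have hej : e j = 0 := notMem_support_iff.mp hjn
          rw [tsub_apply, hej]; simp
        show (coeff e f) = if ∀ j, j < k₀ → ((e - single k₀ 1 : Fin n →₀ ℕ)) j = 0 then
            coeff ((e - single k₀ 1) + single k₀ 1) f else 0
        rw [if_pos hcond, tsub_add_cancel_of_le (single_le_iff.mpr hek₀)]
      · intro k _ hk
        rw [X_def, coeff_monomial_mul]
        by_cases hle : single k 1 ≤ e
        · rw [if_pos hle, one_mul]
          have hek : 1 ≤ e k := single_le_iff.mp hle
          have hkmem : k ∈ e.support := mem_support_iff.mpr (Nat.one_le_iff_ne_zero.mp hek)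
          have hlt : k₀ < k := lt_of_le_of_ne (e.support.min'_le k hkmem) (Ne.symm hk)
          show (if ∀ j, j < k → ((e - single k 1 : Fin n →₀ ℕ)) j = 0 then
              coeff ((e - single k 1) + single k 1) f else 0) = 0
          rw [if_neg]
          intro hcond
          have := hcond k₀ hlt
          rw [tsub_apply, single_apply, if_neg (ne_of_gt hlt)] at this
          omega
        · rw [if_neg hle]
      · intro h
        exact absurd (Finset.mem_univ k₀) h

lemma constCoeff_deriv (Dv : Derivation K (MvPowerSeries (Fin n) K) (MvPowerSeries (Fin n) K))
    (f : MvPowerSeries (Fin n) K) (hf : constantCoeff f = 0) :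
    constantCoeff (Dv f) =
      ∑ k, coeff (single k 1) f * constantCoeff (Dv (X k)) := by
  obtain ⟨g, hg, hfe⟩ := mv_decomp f hf
  conv_lhs => rw [hfe]
  rw [map_sum, map_sum]
  refine Finset.sum_congr rfl fun k _ => ?_
  rw [Derivation.leibniz]
  simp only [smul_eq_mul, map_add, map_mul, constantCoeff_X, zero_mul, add_zero, hg k]
  ring

end Aux

/-- in `R = K[[x₁, …, xₙ]]` (`K = ℝ` or `ℂ`), if for derivations
`X₁, …, X_d` and elements `f₁, …, f_d` of the maximal ideal the determinant
`det [Xᵢ (fⱼ)]` is a unit, then the linear parts of the `Xᵢ` at the origin, i.e. the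
vectors `(Xᵢ(x₁)(0), …, Xᵢ(xₙ)(0))`, are linearly independent over `K`. -/
theorem unit_fitting_det_implies_linear_independence
    {K : Type*} [RCLike K] (n d : ℕ)
    (D : Fin d → Derivation K (MvPowerSeries (Fin n) K) (MvPowerSeries (Fin n) K))
    (f : Fin d → MvPowerSeries (Fin n) K)
    (hf : ∀ j, constantCoeff (f j) = 0)
    (hdet : IsUnit (Matrix.of fun i j => D i (f j)).det) :
    LinearIndependent K
      (fun i : Fin d => fun j : Fin n => constantCoeff (D i (X j))) := by
  set L : Matrix (Fin d) (Fin n) K :=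
    Matrix.of fun i k => constantCoeff (D i (X k)) with hL
  set C : Matrix (Fin n) (Fin d) K :=
    Matrix.of fun k j => coeff (single k 1) (f j) with hC
  have hM : (Matrix.of fun i j => D i (f j)).map (constantCoeff) = L * C := by
    ext i j
    simp only [Matrix.map_apply, Matrix.of_apply, Matrix.mul_apply, hL, hC]
    rw [constCoeff_deriv (D i) (f j) (hf j)]
    exact Finset.sum_congr rfl fun k _ => mul_comm _ _
  have hdet' : IsUnit (L * C).det := by
    rw [← hM, ← RingHom.mapMatrix_apply, ← RingHom.map_det]
    exact hdet.map (constantCoeff)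
  rw [Fintype.linearIndependent_iff]
  intro a ha i
  have hvec : Matrix.vecMul a L = 0 := by
    funext k
    have := congrFun ha k
    simpa [Matrix.vecMul, dotProduct, Finset.sum_apply, hL] using this
  have hvecM : Matrix.vecMul a (L * C) = 0 := by
    rw [← Matrix.vecMul_vecMul, hvec, Matrix.zero_vecMul]
  have ha0 : a = 0 := by
    have hinv : (L * C) * (L * C)⁻¹ = 1 := Matrix.mul_nonsing_inv _ hdet'
    calc a = Matrix.vecMul a ((L * C) * (L * C)⁻¹) := by rw [hinv, Matrix.vecMul_one]
    _ = Matrix.vecMul (Matrix.vecMul a (L * C)) (L * C)⁻¹ := by rw [Matrix.vecMul_vecMul]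
    _ = 0 := by rw [hvecM, Matrix.zero_vecMul]
  exact congrFun ha0 i
end

section
/- Let K be a field of characteristic zero and R = K[[x, y₁,...,y_{n-1}]]. Let X = ∂/∂x and let I be an ideal of R with X(I) ⊆ I and I closed in the coefficient-wise topology. Then I is generated by I ∩ K[[y₁,...,y_{n-1}]]; that is, there exist generators of I that do not depend on the variable x. -/
set_option linter.unusedSectionVars false
set_option maxHeartbeats 1000000

open PowerSeries Finset

section HBall

variable {A : Type*} [CommRing A]

namespace HBPS

/-- the ideal of `n`-th coefficients of elements of `I` of order `≥ n` -/
def J (I : Ideal (PowerSeries A)) (n : ℕ) : Ideal A where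
  carrier := {a | ∃ f, f ∈ I ∧ (∀ k < n, coeff (R := A) k f = 0) ∧ coeff (R := A) n f = a}
  zero_mem' := ⟨0, I.zero_mem, by simp, by simp⟩
  add_mem' := by
    rintro a b ⟨f, hf, hf0, rfl⟩ ⟨g, hg, hg0, rfl⟩
    exact ⟨f + g, I.add_mem hf hg, fun k hk => by simp [hf0 k hk, hg0 k hk], by simp⟩
  smul_mem' := by
    rintro r a ⟨f, hf, hf0, rfl⟩
    exact ⟨C (R := A) r * f, I.mul_mem_left _ hf,
      fun k hk => by simp [coeff_C_mul, hf0 k hk], by simp [coeff_C_mul]⟩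

lemma mem_J {I : Ideal (PowerSeries A)} {n : ℕ} {a : A} :
    a ∈ J I n ↔ ∃ f, f ∈ I ∧ (∀ k < n, coeff (R := A) k f = 0) ∧ coeff (R := A) n f = a := Iff.rfl

lemma J_mono (I : Ideal (PowerSeries A)) : Monotone (J I) := by
  apply monotone_nat_of_le_succ
  intro n a ha
  rcases ha with ⟨f, hf, hf0, rfl⟩
  refine ⟨X * f, I.mul_mem_left _ hf, ?_, by simp [coeff_succ_X_mul]⟩
  intro k hk
  cases k with
  | zero => simp
  | succ j => rw [coeff_succ_X_mul]; exact hf0 j (by omega)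

end HBPS


namespace HBPS
open Classical in
theorem main [IsNoetherianRing A] (I : Ideal (PowerSeries A)) : I.FG := by
  obtain ⟨N, hN⟩ := (monotone_stabilizes_iff_noetherian.2 inferInstance)
    ⟨J I, J_mono I⟩
  have hfg : ∀ n, (J I n).FG := fun n => IsNoetherian.noetherian _
  choose s hs using hfg
  have hsmem : ∀ {n a}, a ∈ s n → a ∈ J I n := fun {n a} ha => by
    rw [← hs n]; exact Submodule.subset_span ha
  have hex : ∀ (n : ℕ) (a : A), ∃ f, a ∈ J I n →
      f ∈ I ∧ (∀ k < n, coeff (R := A) k f = 0) ∧ coeff (R := A) n f = a := by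
    intro n a
    by_cases h : a ∈ J I n
    · obtain ⟨f, h1, h2, h3⟩ := h
      exact ⟨f, fun _ => ⟨h1, h2, h3⟩⟩
    · exact ⟨0, fun h' => absurd h' h⟩
  choose F hF using hex
  -- the generating set
  refine ⟨(Finset.range (N+1)).biUnion (fun n => (s n).image (F n)), le_antisymm ?_ ?_⟩
  · -- span ≤ I
    rw [Ideal.span_le]
    intro f hf
    simp only [Finset.coe_biUnion, Finset.coe_image, Set.mem_iUnion, Set.mem_image,
      Finset.mem_coe, Finset.mem_range] at hf
    obtain ⟨n, -, a, ha, rfl⟩ := hf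
    exact (hF n a (hsmem ha)).1
  · -- I ≤ span
    intro g hg
    set T : Finset (PowerSeries A) :=
      (Finset.range (N+1)).biUnion (fun n => (s n).image (F n)) with hT
    -- coefficient extraction
    have hc : ∀ (t : ℕ) (rr : PowerSeries A), ∃ c : A → A,
        (rr ∈ I ∧ ∀ k < t, coeff (R := A) k rr = 0) →
        ∑ a ∈ s (min t N), c a * a = coeff (R := A) t rr := by
      intro t rr
      by_cases h : rr ∈ I ∧ ∀ k < t, coeff (R := A) k rr = 0
      · have hJ : coeff (R := A) t rr ∈ J I (min t N) := by
          rcases le_or_gt t N with h' | h'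
          · rw [min_eq_left h']; exact ⟨rr, h.1, h.2, rfl⟩
          · have h2 : J I N = J I t := hN t h'.le
            rw [min_eq_right h'.le, h2]
            exact ⟨rr, h.1, h.2, rfl⟩
        rw [← hs (min t N)] at hJ
        obtain ⟨c, -, hc⟩ := Submodule.mem_span_finset.1 hJ
        exact ⟨c, fun _ => by simpa [smul_eq_mul] using hc⟩
      · exact ⟨0, fun h' => absurd h' h⟩
    choose cf hcf using hc
    -- the subtraction step
    set d : ℕ → PowerSeries A → PowerSeries A := fun t rr =>
      ∑ a ∈ s (min t N), C (R := A) (cf t rr a) * (X ^ (t - min t N) * F (min t N) a) with hd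
    set r : ℕ → PowerSeries A := fun t => Nat.rec g (fun t' rt => rt - d t' rt) t with hr
    have hr0 : r 0 = g := rfl
    have hrsucc : ∀ t, r (t+1) = r t - d t (r t) := fun t => rfl
    -- coefficients of d
    have hdcoeff : ∀ (t : ℕ) (rr : PowerSeries A) (k : ℕ), coeff (R := A) k (d t rr) =
        ∑ a ∈ s (min t N),
          cf t rr a * (if t - min t N ≤ k then coeff (R := A) (k - (t - min t N)) (F (min t N) a) else 0) := by
      intro t rr k
      rw [hd]
      simp only [map_sum, coeff_C_mul]
      refine Finset.sum_congr rfl fun a _ => ?_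
      rw [mul_comm (X ^ (t - min t N)), coeff_mul_X_pow']
    have hdlow : ∀ t (rr : PowerSeries A), ∀ k < t, coeff (R := A) k (d t rr) = 0 := by
      intro t rr k hk
      rw [hdcoeff]
      refine Finset.sum_eq_zero fun a ha => ?_
      split_ifs with h
      · rw [(hF _ a (hsmem ha)).2.1 _ (by omega), mul_zero]
      · rw [mul_zero]
    -- invariant
    have hinv : ∀ t, r t ∈ I ∧ ∀ k < t, coeff (R := A) k (r t) = 0 := by
      intro t
      induction t with
      | zero => exact ⟨hg, by omega⟩
      | succ t ih =>
        have hdI : d t (r t) ∈ I := by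
          rw [hd]
          exact Ideal.sum_mem _ fun a ha =>
            I.mul_mem_left _ (I.mul_mem_left _ (hF _ a (hsmem ha)).1)
        refine ⟨by rw [hrsucc]; exact I.sub_mem ih.1 hdI, ?_⟩
        intro k hk
        rw [hrsucc, map_sub]
        rcases lt_or_ge k t with h | h
        · rw [ih.2 k h, hdlow t _ k h, sub_zero]
        · have hkt : k = t := by omega
          subst hkt
          rw [hdcoeff, sub_eq_zero, ← hcf k (r k) ih]
          refine Finset.sum_congr rfl fun a ha => ?_
          rw [if_pos (Nat.sub_le k (min k N)), Nat.sub_sub_self (min_le_left k N),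
            (hF _ a (hsmem ha)).2.2]
    -- telescoping
    have htel : ∀ m, g = r m + ∑ t ∈ Finset.range m, d t (r t) := by
      intro m
      induction m with
      | zero => simp [hr0]
      | succ m ih =>
        rw [Finset.sum_range_succ, hrsucc m, ih]
        ring
    have hgcoeff : ∀ m, coeff (R := A) m g = coeff (R := A) m (∑ t ∈ Finset.range (m+1), d t (r t)) := by
      intro m
      rw [htel (m+1), map_add, (hinv (m+1)).2 m (by omega), zero_add]
    -- the per-generator series
    set H : ℕ → A → PowerSeries A := fun n a =>
      mk fun e => if min (n + e) N = n then cf (n + e) (r (n + e)) a else 0 with hH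
    have key : g = ∑ n ∈ Finset.range (N+1), ∑ a ∈ s n, H n a * F n a := by
      ext m
      rw [hgcoeff m]
      -- LHS: sum over steps
      have hL : coeff (R := A) m (∑ t ∈ Finset.range (m+1), d t (r t)) =
          ∑ t ∈ Finset.range (m+1), ∑ a ∈ s (min t N),
            cf t (r t) a * coeff (R := A) (m - (t - min t N)) (F (min t N) a) := by
        rw [map_sum]
        refine Finset.sum_congr rfl fun t ht => ?_
        rw [hdcoeff]
        refine Finset.sum_congr rfl fun a _ => ?_
        rw [if_pos (by simp only [Finset.mem_range] at ht; omega)]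
      -- RHS: triple sum
      have hR : coeff (R := A) m (∑ n ∈ Finset.range (N+1), ∑ a ∈ s n, H n a * F n a) =
          ∑ n ∈ Finset.range (N+1), ∑ k ∈ Finset.range (m+1), ∑ a ∈ s n,
            (if min (n + k) N = n then cf (n + k) (r (n + k)) a else 0) *
              coeff (R := A) (m - k) (F n a) := by
        rw [map_sum]
        refine Finset.sum_congr rfl fun n _ => ?_
        rw [map_sum]
        have hone : ∀ a ∈ s n, coeff (R := A) m (H n a * F n a) =
            ∑ k ∈ Finset.range (m+1),
              (if min (n + k) N = n then cf (n + k) (r (n + k)) a else 0) *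
                coeff (R := A) (m - k) (F n a) := by
          intro a _
          rw [coeff_mul, Finset.Nat.sum_antidiagonal_eq_sum_range_succ_mk]
          exact Finset.sum_congr rfl fun k _ => by rw [hH, coeff_mk]
        rw [Finset.sum_congr rfl hone, Finset.sum_comm]
      rw [hL, hR]
      -- reindex
      set G : ℕ → ℕ → A := fun n k => ∑ a ∈ s n,
        (if min (n + k) N = n then cf (n + k) (r (n + k)) a else 0) *
          coeff (R := A) (m - k) (F n a) with hG
      have hRG : ∑ n ∈ Finset.range (N+1), ∑ k ∈ Finset.range (m+1), ∑ a ∈ s n,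
          (if min (n + k) N = n then cf (n + k) (r (n + k)) a else 0) *
            coeff (R := A) (m - k) (F n a)
          = ∑ p ∈ (Finset.range (N+1)) ×ˢ (Finset.range (m+1)), G p.1 p.2 := by
        rw [Finset.sum_product]
      rw [hRG]
      -- prune zero terms
      have hzero : ∀ p ∈ (Finset.range (N+1)) ×ˢ (Finset.range (m+1)),
          G p.1 p.2 ≠ 0 → (min (p.1 + p.2) N = p.1 ∧ p.1 + p.2 ≤ m) := by
        rintro ⟨n, k⟩ hp hne
        simp only [Finset.mem_product, Finset.mem_range] at hp
        by_contra hcon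
        apply hne
        rw [hG]
        refine Finset.sum_eq_zero fun a ha => ?_
        by_cases h1 : min (n + k) N = n
        · have h2 : m < n + k := by omega
          rw [(hF _ a (hsmem ha)).2.1 (m - k) (by omega), mul_zero]
        · rw [if_neg h1, zero_mul]
      rw [← Finset.sum_filter_of_ne hzero]
      -- bijection with range (m+1)
      refine Finset.sum_nbij' (fun t => (min t N, t - min t N)) (fun p => p.1 + p.2)
        ?_ ?_ ?_ ?_ ?_
      · intro t ht
        simp only [Finset.mem_range] at ht
        simp only [Finset.mem_filter, Finset.mem_product, Finset.mem_range]
        refine ⟨⟨by omega, by omega⟩, ?_, by omega⟩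
        rw [Nat.add_sub_cancel' (min_le_left t N)]
      · rintro ⟨n, k⟩ hp
        simp only [Finset.mem_filter, Finset.mem_product, Finset.mem_range] at hp
        simp only [Finset.mem_range]
        omega
      · intro t ht
        simp only
        rw [Nat.add_sub_cancel' (min_le_left t N)]
      · rintro ⟨n, k⟩ hp
        simp only [Finset.mem_filter, Finset.mem_product, Finset.mem_range] at hp
        obtain ⟨-, h1, -⟩ := hp
        exact Prod.ext h1 (by show n + k - min (n+k) N = k; omega)
      · intro t ht
        rw [hG]
        refine Finset.sum_congr rfl fun a _ => ?_
        rw [Nat.add_sub_cancel' (min_le_left t N), if_pos rfl]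
    -- conclude
    rw [key]
    refine Ideal.sum_mem _ fun n hn => Ideal.sum_mem _ fun a ha => ?_
    refine Ideal.mul_mem_left _ _ (Ideal.subset_span ?_)
    rw [hT]
    simp only [Finset.coe_biUnion, Finset.coe_image, Set.mem_iUnion, Set.mem_image,
      Finset.mem_coe]
    exact ⟨n, hn, a, ha, rfl⟩

end HBPS

theorem PowerSeries.isNoetherianRing_of [IsNoetherianRing A] :
    IsNoetherianRing (PowerSeries A) := by
  rw [isNoetherianRing_iff_ideal_fg]
  exact HBPS.main


namespace HBPS
section Equiv


lemma finsupp_cons_add {m : ℕ} (a b : ℕ) (f g : Fin m →₀ ℕ) :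
    Finsupp.cons a f + Finsupp.cons b g = Finsupp.cons (a + b) (f + g) := by
  ext i
  refine Fin.cases ?_ ?_ i
  · simp [Finsupp.cons_zero]
  · intro j
    simp [Finsupp.cons_succ]

lemma finsupp_tail_add {m : ℕ} (u v : Fin (m+1) →₀ ℕ) :
    (u + v).tail = u.tail + v.tail := by
  ext i
  simp [Finsupp.tail_apply]

variable {R : Type*} [CommSemiring R] {m : ℕ}

/-- reinterpret a power series in `m+1` variables as a power series in one variable
with coefficients power series in `m` variables -/
noncomputable def T (φ : MvPowerSeries (Fin (m+1)) R) : PowerSeries (MvPowerSeries (Fin m) R) :=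
  fun u d => φ (Finsupp.cons (u ()) d)

lemma happ (f : PowerSeries (MvPowerSeries (Fin m) R)) (k : ℕ) :
    f (Finsupp.single () k) = PowerSeries.coeff k f := rfl

lemma coeff_T (φ : MvPowerSeries (Fin (m+1)) R) (k : ℕ) (d : Fin m →₀ ℕ) :
    PowerSeries.coeff k (T φ) d = φ (Finsupp.cons k d) := by
  rw [← happ]
  show φ (Finsupp.cons ((Finsupp.single () k : Unit →₀ ℕ) ()) d) = _
  rw [Finsupp.single_eq_same]

lemma sum_apply'' {ι : Type*} (s : Finset ι) (f : ι → MvPowerSeries (Fin m) R)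
    (d : Fin m →₀ ℕ) : (∑ i ∈ s, f i) d = ∑ i ∈ s, f i d := by
  rw [← MvPowerSeries.coeff_apply (∑ i ∈ s, f i) d, map_sum]
  simp [MvPowerSeries.coeff_apply]

lemma mul_T (φ ψ : MvPowerSeries (Fin (m+1)) R) : T (φ * ψ) = T φ * T ψ := by
  funext u d
  obtain ⟨k, rfl⟩ : ∃ k, u = Finsupp.single () k := ⟨u (), Finsupp.unique_single u⟩
  show T (φ * ψ) (Finsupp.single () k) d = (T φ * T ψ) (Finsupp.single () k) d
  rw [happ (T (φ * ψ)) k, happ (T φ * T ψ) k, coeff_T, PowerSeries.coeff_mul, sum_apply'']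
  have hterm : ∀ p : ℕ × ℕ,
      (PowerSeries.coeff p.1 (T φ) * PowerSeries.coeff p.2 (T ψ)) d =
      ∑ q ∈ Finset.HasAntidiagonal.antidiagonal d, φ (Finsupp.cons p.1 q.1) * ψ (Finsupp.cons p.2 q.2) := by
    intro p
    rw [← MvPowerSeries.coeff_apply (PowerSeries.coeff (R := MvPowerSeries (Fin m) R) p.1 (T φ) * PowerSeries.coeff (R := MvPowerSeries (Fin m) R) p.2 (T ψ)) d, MvPowerSeries.coeff_mul]
    refine Finset.sum_congr rfl fun q _ => ?_
    rw [MvPowerSeries.coeff_apply, MvPowerSeries.coeff_apply, coeff_T, coeff_T]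
  rw [Finset.sum_congr rfl fun p _ => hterm p]
  -- now reindex
  have lhs : (φ * ψ) (Finsupp.cons k d) =
      ∑ P ∈ Finset.HasAntidiagonal.antidiagonal (Finsupp.cons k d), φ P.1 * ψ P.2 := by
    rw [← MvPowerSeries.coeff_apply (φ * ψ), MvPowerSeries.coeff_mul]
    simp [MvPowerSeries.coeff_apply]
  rw [lhs, ← Finset.sum_product']
  refine Finset.sum_nbij'
    (fun P => ((P.1 0, P.2 0), (P.1.tail, P.2.tail)))
    (fun z => (Finsupp.cons z.1.1 z.2.1, Finsupp.cons z.1.2 z.2.2)) ?_ ?_ ?_ ?_ ?_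
  · rintro ⟨e₁, e₂⟩ hP
    rw [Finset.HasAntidiagonal.mem_antidiagonal] at hP
    simp only [Finset.mem_product, Finset.HasAntidiagonal.mem_antidiagonal]
    constructor
    · have := congrFun (congrArg (fun (x : Fin (m+1) →₀ ℕ) => (x : Fin (m+1) → ℕ)) hP) 0
      simpa [Finsupp.cons_zero] using this
    · rw [← finsupp_tail_add, hP, Finsupp.tail_cons]
  · rintro ⟨⟨p₁, p₂⟩, ⟨q₁, q₂⟩⟩ hz
    simp only [Finset.mem_product, Finset.HasAntidiagonal.mem_antidiagonal] at hz
    rw [Finset.HasAntidiagonal.mem_antidiagonal]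
    show Finsupp.cons p₁ q₁ + Finsupp.cons p₂ q₂ = Finsupp.cons k d
    rw [finsupp_cons_add, hz.1, hz.2]
  · rintro ⟨e₁, e₂⟩ _
    show (Finsupp.cons (e₁ 0) e₁.tail, Finsupp.cons (e₂ 0) e₂.tail) = (e₁, e₂)
    rw [Finsupp.cons_tail, Finsupp.cons_tail]
  · rintro ⟨⟨p₁, p₂⟩, ⟨q₁, q₂⟩⟩ _
    show (((Finsupp.cons p₁ q₁ : Fin (m+1) →₀ ℕ) 0, (Finsupp.cons p₂ q₂ : Fin (m+1) →₀ ℕ) 0),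
      ((Finsupp.cons p₁ q₁ : Fin (m+1) →₀ ℕ).tail, (Finsupp.cons p₂ q₂ : Fin (m+1) →₀ ℕ).tail))
      = ((p₁, p₂), (q₁, q₂))
    rw [Finsupp.cons_zero, Finsupp.cons_zero, Finsupp.tail_cons, Finsupp.tail_cons]
  · rintro ⟨e₁, e₂⟩ _
    show φ e₁ * ψ e₂ = φ (Finsupp.cons (e₁ 0) e₁.tail) * ψ (Finsupp.cons (e₂ 0) e₂.tail)
    rw [Finsupp.cons_tail, Finsupp.cons_tail]

/-- `K[[x₀,…,x_m]] ≃ K[[x₁,…,x_m]][[x₀]]` -/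
noncomputable def consEquiv :
    MvPowerSeries (Fin (m+1)) R ≃+* PowerSeries (MvPowerSeries (Fin m) R) where
  toFun := T
  invFun f := fun e => f (Finsupp.single () (e 0)) e.tail
  left_inv φ := funext fun e => by
    show φ (Finsupp.cons ((Finsupp.single () (e 0) : Unit →₀ ℕ) ()) e.tail) = φ e
    rw [Finsupp.single_eq_same, Finsupp.cons_tail]
  right_inv f := funext fun u => funext fun d => by
    show f (Finsupp.single () ((Finsupp.cons (u ()) d) 0)) (Finsupp.cons (u ()) d).tail = f u d
    rw [Finsupp.cons_zero, Finsupp.tail_cons]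
    congr 1
    exact (Finsupp.unique_single u).symm
  map_add' φ ψ := rfl
  map_mul' := mul_T

/-- `K[[x₁,…,x₀]] ≃ K` for zero variables -/
noncomputable def zeroEquiv : MvPowerSeries (Fin 0) R ≃+* R where
  toFun φ := φ 0
  invFun := MvPowerSeries.C (σ := Fin 0) (R := R)
  left_inv φ := by
    funext e
    rw [Subsingleton.elim e (0 : Fin 0 →₀ ℕ)]
    show MvPowerSeries.coeff (R := R) 0 (MvPowerSeries.C (σ := Fin 0) (R := R) (φ 0)) = φ 0
    simp
  right_inv a := by
    show MvPowerSeries.coeff (R := R) 0 (MvPowerSeries.C (σ := Fin 0) (R := R) a) = a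
    simp
  map_add' φ ψ := rfl
  map_mul' φ ψ := by
    show MvPowerSeries.coeff (R := R) 0 (φ * ψ) = _
    rw [MvPowerSeries.coeff_mul]
    simp [MvPowerSeries.coeff_apply]


theorem mv_noetherian (R : Type*) [CommRing R] [IsNoetherianRing R] (m : ℕ) :
    IsNoetherianRing (MvPowerSeries (Fin m) R) := by
  induction m with
  | zero => exact isNoetherianRing_of_ringEquiv R (zeroEquiv (R := R)).symm
  | succ m ih =>
    haveI := ih
    haveI : IsNoetherianRing (PowerSeries (MvPowerSeries (Fin m) R)) :=
      PowerSeries.isNoetherianRing_of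
    exact isNoetherianRing_of_ringEquiv _ (consEquiv (R := R) (m := m)).symm

end Equiv

section Anal



variable {S : Type*} [CommRing S] [Algebra ℚ S]

lemma coeff_derivative_iterate (f : PowerSeries S) (k i : ℕ) :
    coeff (R := S) i ((d⁄dX S)^[k] f) = (Nat.ascFactorial (i+1) k : S) * coeff (R := S) (i+k) f := by
  induction k generalizing f i with
  | zero => simp
  | succ k ih =>
    rw [Function.iterate_succ_apply, ih, PowerSeries.coeff_derivative,
      Nat.ascFactorial_succ, show i + (k+1) = (i + k) + 1 from rfl]
    push_cast
    ring

variable (I : Ideal (PowerSeries S))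

lemma iterate_mem (hX : ∀ f ∈ I, d⁄dX S f ∈ I) :
    ∀ k, ∀ f ∈ I, (d⁄dX S)^[k] f ∈ I := by
  intro k
  induction k with
  | zero => exact fun f hf => hf
  | succ k ih =>
    intro f hf
    rw [Function.iterate_succ_apply]
    exact ih _ (hX f hf)

lemma const_coeff_mem (hX : ∀ f ∈ I, d⁄dX S f ∈ I)
    (hclosed : ∀ g : PowerSeries S,
      (∀ N : ℕ, ∃ h ∈ I, ∀ i ≤ N, coeff (R := S) i h = coeff (R := S) i g) → g ∈ I)
    {f : PowerSeries S} (hf : f ∈ I) :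
    C (R := S) (coeff (R := S) 0 f) ∈ I := by
  apply hclosed
  intro N
  refine ⟨∑ k ∈ Finset.range (N+1),
    C (R := S) (algebraMap ℚ S ((-1)^k / k.factorial)) * (X ^ k * (d⁄dX S)^[k] f), ?_, ?_⟩
  · exact Ideal.sum_mem _ fun k _ =>
      I.mul_mem_left _ (I.mul_mem_left _ (iterate_mem I hX k f hf))
  · intro i hi
    rw [map_sum]
    have hterm : ∀ k, coeff (R := S) i
        (C (R := S) (algebraMap ℚ S ((-1)^k / k.factorial)) * (X ^ k * (d⁄dX S)^[k] f))
        = algebraMap ℚ S ((-1)^k / k.factorial) *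
          (if k ≤ i then ((Nat.ascFactorial (i-k+1) k : S)) * coeff (R := S) i f else 0) := by
      intro k
      rw [coeff_C_mul, mul_comm (X ^ k), coeff_mul_X_pow']
      congr 1
      split_ifs with h
      · rw [coeff_derivative_iterate, Nat.sub_add_cancel h]
      · rfl
    rw [Finset.sum_congr rfl fun k _ => hterm k]
    have hasc : ∀ k, k ≤ i → Nat.ascFactorial (i-k+1) k = i.choose k * k.factorial := by
      intro k hk
      have h1 : (i-k).factorial * Nat.ascFactorial (i-k+1) k = ((i-k)+k).factorial :=
        Nat.factorial_mul_ascFactorial (i-k) k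
      rw [Nat.sub_add_cancel hk] at h1
      have h2 : i.choose k * k.factorial * (i-k).factorial = i.factorial :=
        Nat.choose_mul_factorial_mul_factorial hk
      refine Nat.eq_of_mul_eq_mul_left (Nat.factorial_pos (i-k)) ?_
      rw [h1, ← h2]
      ring
    have hstep : ∀ k ∈ Finset.range (N+1),
        algebraMap ℚ S ((-1)^k / k.factorial) *
          (if k ≤ i then ((Nat.ascFactorial (i-k+1) k : S)) * coeff (R := S) i f else 0)
        = (if k ≤ i then algebraMap ℚ S ((-1)^k * i.choose k) else 0) * coeff (R := S) i f := by
      intro k _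
      split_ifs with h
      · rw [← mul_assoc]
        congr 2
        rw [show ((Nat.ascFactorial (i-k+1) k : S)) =
          algebraMap ℚ S (Nat.ascFactorial (i-k+1) k : ℚ) by rw [map_natCast],
          ← map_mul]
        congr 1
        rw [hasc k h]
        push_cast
        field_simp
      · rw [mul_zero, zero_mul]
    rw [Finset.sum_congr rfl hstep, ← Finset.sum_mul]
    have hsum : ∑ k ∈ Finset.range (N+1),
        (if k ≤ i then algebraMap ℚ S ((-1)^k * i.choose k) else 0)
        = algebraMap ℚ S (if i = 0 then 1 else 0) := by
      rw [← Finset.sum_subset (Finset.range_subset_range.2 (by omega : i+1 ≤ N+1))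
        (fun k _ hk => by rw [if_neg (by simp only [Finset.mem_range] at hk; omega)])]
      rw [Finset.sum_congr rfl (fun k hk => by
        rw [if_pos (by simp only [Finset.mem_range] at hk; omega)]), ← map_sum]
      congr 1
      have := Int.alternating_sum_range_choose (n := i)
      calc ∑ k ∈ Finset.range (i+1), ((-1:ℚ)^k * i.choose k)
          = ((∑ k ∈ Finset.range (i+1), ((-1:ℤ)^k * i.choose k) : ℤ) : ℚ) := by
            push_cast
            exact Finset.sum_congr rfl fun k _ => by ring
        _ = _ := by rw [this]; split_ifs <;> norm_num
    rw [hsum, coeff_C]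
    split_ifs with h
    · subst h; rw [map_one, one_mul]
    · rw [map_zero, zero_mul]

lemma all_coeff_mem (hX : ∀ f ∈ I, d⁄dX S f ∈ I)
    (hclosed : ∀ g : PowerSeries S,
      (∀ N : ℕ, ∃ h ∈ I, ∀ i ≤ N, coeff (R := S) i h = coeff (R := S) i g) → g ∈ I)
    {f : PowerSeries S} (hf : f ∈ I) (i : ℕ) :
    C (R := S) (coeff (R := S) i f) ∈ I := by
  have h1 := const_coeff_mem I hX hclosed (iterate_mem I hX i f hf)
  rw [coeff_derivative_iterate] at h1
  norm_num [Nat.one_ascFactorial] at h1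
  have key : C (R := S) (coeff (R := S) i f) = C (R := S) (algebraMap ℚ S ((i.factorial : ℚ)⁻¹)) *
      ((i.factorial : PowerSeries S) * C (R := S) (coeff (R := S) i f)) := by
    have hu : C (R := S) (algebraMap ℚ S ((i.factorial:ℚ)⁻¹)) * (i.factorial : PowerSeries S) = 1 := by
      rw [show ((i.factorial : PowerSeries S)) = C (R := S) ((i.factorial : S)) by rw [map_natCast],
        ← map_mul,
        show algebraMap ℚ S ((i.factorial:ℚ)⁻¹) * (i.factorial : S) = 1 by
          rw [show ((i.factorial : S)) = algebraMap ℚ S (i.factorial : ℚ) by rw [map_natCast],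
            ← map_mul, inv_mul_cancel₀ (by exact_mod_cast i.factorial_ne_zero), map_one],
        map_one]
    rw [← mul_assoc, hu, one_mul]
  rw [key]
  exact I.mul_mem_left _ h1


end Anal
end HBPS

end HBall

/-- in `R = K[[x, y₁, …, y_{n-1}]]` (power series in `x` over
`S = K[[y₁, …, y_{n-1}]]`), an ideal `I` invariant under `∂/∂x` and closed for
coefficient-wise convergence is generated by its elements not involving `x`, i.e.
by `I ∩ K[[y]]` where `K[[y]] = range (C)`. -/
theorem invariant_closed_ideal_generated_by_x_free_elements
    {K : Type*} [Field K] [CharZero K] (n : ℕ)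
    (I : Ideal (PowerSeries (MvPowerSeries (Fin (n - 1)) K)))
    (hX : ∀ f ∈ I, PowerSeries.derivative (MvPowerSeries (Fin (n - 1)) K) f ∈ I)
    (hclosed : ∀ g : PowerSeries (MvPowerSeries (Fin (n - 1)) K),
      (∀ N : ℕ, ∃ h ∈ I, ∀ i ≤ N,
        PowerSeries.coeff (R := MvPowerSeries (Fin (n - 1)) K) i h =
        PowerSeries.coeff (R := MvPowerSeries (Fin (n - 1)) K) i g) → g ∈ I) :
    I = Ideal.span
      ((I : Set (PowerSeries (MvPowerSeries (Fin (n - 1)) K))) ∩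
        Set.range (PowerSeries.C (R := MvPowerSeries (Fin (n - 1)) K))) := by
  set S := MvPowerSeries (Fin (n - 1)) K with hS
  haveI : IsNoetherianRing S := HBPS.mv_noetherian K (n - 1)
  refine le_antisymm ?_ ?_
  · -- I ≤ span
    intro f hf
    set J : Ideal S := Ideal.comap (C (R := S)) I with hJ
    obtain ⟨s, hs⟩ : J.FG := IsNoetherian.noetherian J
    have hcoeffJ : ∀ i, coeff (R := S) i f ∈ J := fun i =>
      Ideal.mem_comap.2 (HBPS.all_coeff_mem I hX hclosed hf i)
    have hrep : ∀ i, ∃ c : S → S, ∑ a ∈ s, c a * a = coeff (R := S) i f := by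
      intro i
      have h1 := hcoeffJ i
      rw [← hs] at h1
      obtain ⟨c, -, hc⟩ := Submodule.mem_span_finset.1 h1
      exact ⟨c, by simpa [smul_eq_mul] using hc⟩
    choose cf hcf using hrep
    have key : f = ∑ a ∈ s, mk (fun i => cf i a) * C (R := S) a := by
      refine PowerSeries.ext fun m => ?_
      rw [map_sum,
        Finset.sum_congr rfl fun a _ => coeff_mul_C m (mk fun i => cf i a) a]
      simp only [coeff_mk]
      exact (hcf m).symm
    rw [key]
    refine Ideal.sum_mem _ fun a ha => ?_
    refine Ideal.mul_mem_left _ _ (Ideal.subset_span ⟨?_, a, rfl⟩)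
    have h2 : a ∈ J := by rw [← hs]; exact Ideal.subset_span ha
    exact Ideal.mem_comap.1 h2
  · rw [Ideal.span_le]
    rintro g ⟨hgI, -⟩
    exact hgI
end

section
/- Let R be a commutative ring, D a derivation of R, t ∈ R with D(t) ∈ (t) (t generates a D-invariant principal ideal), and J an ideal of R. Then D(tⁿJ) + tⁿJ = tⁿ(D(J) + J) as ideals, where D(I) denotes the ideal generated by {D(f) : f ∈ I}. In particular the 'controlled transform' commutes with the derivative closure operation: multiplying by an invariant principal ideal commutes with forming I + D[I]. -/
/-- if `D t ∈ (t)`, then `D(tⁿJ) + tⁿJ = tⁿ·(D(J) + J)`: the controlled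
transform by an invariant principal ideal commutes with the derivative closure. -/
theorem controlled_transform_derivative_closure
    {R : Type*} [CommRing R] (D : Derivation ℤ R R) (t : R)
    (ht : D t ∈ Ideal.span {t}) (J : Ideal R) (n : ℕ) :
    derIdeal D (Ideal.span {t ^ n} * J) + Ideal.span {t ^ n} * J =
      Ideal.span {t ^ n} * (derIdeal D J + J) := by
  obtain ⟨c, hc⟩ := Ideal.mem_span_singleton.mp ht
  have hDtn : ∃ d, D (t ^ n) = t ^ n * d := by
    cases n with
    | zero => exact ⟨0, by simp⟩
    | succ m =>
      refine ⟨(m + 1 : ℕ) • c, ?_⟩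
      rw [Derivation.leibniz_pow, hc]
      simp only [Nat.add_sub_cancel, nsmul_eq_mul, Nat.cast_add, Nat.cast_one, smul_eq_mul]
      ring
  obtain ⟨d, hd⟩ := hDtn
  have htn : (t ^ n) ∈ Ideal.span {t ^ n} := Ideal.mem_span_singleton_self _
  apply le_antisymm
  · apply sup_le
    · rw [derIdeal, Ideal.span_le]
      rintro y ⟨f, hf, rfl⟩
      refine Submodule.mul_induction_on hf ?_ ?_
      · rintro m hm x hx
        obtain ⟨r, rfl⟩ := Ideal.mem_span_singleton.mp hm
        have key : D ((t ^ n * r) * x)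
            = t ^ n * ((d * r + D r) * x) + t ^ n * (r * D x) := by
          rw [Derivation.leibniz, Derivation.leibniz, hd]; simp only [smul_eq_mul]; ring
        rw [key]
        refine add_mem (Ideal.mul_mem_mul htn ?_) (Ideal.mul_mem_mul htn ?_)
        · exact Ideal.mem_sup_right (J.mul_mem_left _ hx)
        · exact Ideal.mem_sup_left (Ideal.mul_mem_left _ _
            (Ideal.subset_span ⟨x, hx, rfl⟩))
      · intro a b ha hb
        rw [map_add]
        exact add_mem ha hb
    · exact Ideal.mul_mono_right le_sup_right
  · rw [mul_add]
    apply sup_le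
    · rw [derIdeal, Ideal.span_mul_span, Ideal.span_le]
      intro z hz
      simp only [Set.mem_mul, Set.mem_iUnion, Set.mem_singleton_iff, exists_prop,
        Set.mem_setOf_eq] at hz
      obtain ⟨a, rfl, b, ⟨j, hj, rfl⟩, rfl⟩ := hz
      have key : t ^ n * D j = D (t ^ n * j) - t ^ n * (d * j) := by
        rw [Derivation.leibniz, hd]; simp only [smul_eq_mul]; ring
      rw [key]
      refine sub_mem (Ideal.mem_sup_left ?_) (Ideal.mem_sup_right ?_)
      · exact Ideal.subset_span ⟨t ^ n * j, Ideal.mul_mem_mul htn hj, rfl⟩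
      · exact Ideal.mul_mem_mul htn (J.mul_mem_left _ hj)
    · exact le_sup_right
end
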